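/- arXiv:0907.0302 — 8 statements merged into one kernel-verified Lean document; each statement's English description precedes it below -/
import Mathlib

section
/- Let δ ⊆ ℕ^n be a finite standard set with more than one element, and let α ∈ ℬ(δ) \ 𝒞(δ) be a border element that is not a corner. Then there exists a standard basis vector ν = e_i such that α - ν ∈ ℬ(δ). -/
/-- A standard set in ℕ^n: its complement is closed under addition of elements of ℕ^n. -/
def StdSet {n : ℕ} (δ : Set (Fin n → ℕ)) : Prop :=
  ∀ α ∉ δ, ∀ γ : Fin n → ℕ, α + γ ∉ δ

/-- A corner of δ: an element outside δ all of whose predecessors (when they exist in ℕ^n)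
lie in δ. -/
def StdCorner {n : ℕ} (δ : Set (Fin n → ℕ)) (α : Fin n → ℕ) : Prop :=
  α ∉ δ ∧ ∀ (i : Fin n) (β : Fin n → ℕ), β + Pi.single i 1 = α → β ∈ δ

/-- The border of δ: elements outside δ of the form β + e_i with β ∈ δ. -/
def StdBorder {n : ℕ} (δ : Set (Fin n → ℕ)) : Set (Fin n → ℕ) :=
  {α | α ∉ δ ∧ ∃ (i : Fin n), ∃ β ∈ δ, β + Pi.single i 1 = α}

theorem stmt4 {n : ℕ} (δ : Set (Fin n → ℕ)) (h : StdSet δ) (hfin : δ.Finite)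
    (hnt : δ.Nontrivial) (α : Fin n → ℕ)
    (hα : α ∈ StdBorder δ) (hnc : ¬ StdCorner δ α) :
    ∃ i : Fin n, ∃ β ∈ StdBorder δ, β + Pi.single i 1 = α := by
  obtain ⟨hαδ, j, β', hβ', hβ'α⟩ := hα
  -- not a corner: some predecessor β of α is not in δ
  rw [StdCorner] at hnc
  push_neg at hnc
  obtain ⟨i, β, hβα, hβδ⟩ := hnc hαδ
  have hij : i ≠ j := by
    rintro rfl
    have heq : β = β' := add_left_injective _ (hβα.trans hβ'α.symm)
    exact hβδ (heq ▸ hβ')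
  -- β' i ≥ 1
  have hβ'i : 1 ≤ β' i := by
    have h1 : β i + 1 = α i := by
      have := congrFun hβα i; simpa [Pi.single_eq_same] using this
    have h2 : β' i = α i := by
      have := congrFun hβ'α i; simpa [Pi.single_eq_of_ne hij] using this
    omega
  set γ : Fin n → ℕ := fun k => β' k - (Pi.single i 1 : Fin n → ℕ) k with hγ
  have hγi : γ + Pi.single i 1 = β' := by
    funext k
    by_cases hk : k = i
    · subst hk; simp [hγ, Pi.single_eq_same]; omega
    · simp [hγ, Pi.single_eq_of_ne hk]
  have hγj : γ + Pi.single j 1 = β := by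
    have : (γ + Pi.single j 1) + Pi.single i 1 = β + Pi.single i 1 := by
      rw [hβα, add_right_comm, hγi, hβ'α]
    exact add_right_cancel this
  have hγδ : γ ∈ δ := by
    by_contra hγn
    exact (hγi ▸ h γ hγn (Pi.single i 1)) hβ'
  exact ⟨i, β, ⟨hβδ, j, γ, hγδ, hγj⟩, hβα⟩
end

section
/- Let B be a commutative ring, δ a finite standard set, and φ : B[x] → ⊕_{β∈δ} B·x^β a B-module homomorphism with φ(x^β) = x^β for all β ∈ δ. Suppose the multiplicativity condition φ(x^{α+e_i}) = φ(φ(x^α)·x^{e_i}) holds for all α ∈ ℕ^n and all i (where the right side is computed by B-linearity using φ(x^γ) for γ ∈ δ). Then ker φ is an ideal of B[x], and the induced map B[x]/ker φ → ⊕_{β∈δ} B·x^β is an isomorphism of B-modules. -/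
theorem stmt11 {B : Type*} [CommRing B] {n : ℕ}
    (δ : Finset (Fin n →₀ ℕ))
    (hstd : ∀ α ∉ δ, ∀ γ : Fin n →₀ ℕ, α + γ ∉ δ)
    (φ : MvPolynomial (Fin n) B →ₗ[B] (↥δ → B))
    (hid : ∀ β : ↥δ, φ (MvPolynomial.monomial (β : Fin n →₀ ℕ) 1) =
      fun γ => if γ = β then 1 else 0)
    (hmul : ∀ (α : Fin n →₀ ℕ) (i : Fin n),
      φ (MvPolynomial.monomial (α + Finsupp.single i 1) 1) =
        ∑ γ : ↥δ, φ (MvPolynomial.monomial α 1) γ •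
          φ (MvPolynomial.monomial ((γ : Fin n →₀ ℕ) + Finsupp.single i 1) 1)) :
    (∀ f ∈ LinearMap.ker φ, ∀ g : MvPolynomial (Fin n) B, g * f ∈ LinearMap.ker φ) ∧
    ∃ e : (MvPolynomial (Fin n) B ⧸ LinearMap.ker φ) ≃ₗ[B] (↥δ → B),
      ∀ f : MvPolynomial (Fin n) B, e (Submodule.Quotient.mk f) = φ f := by
  classical
  -- one-step lemma
  have hE : ∀ (i : Fin n) (g : MvPolynomial (Fin n) B),
      φ (MvPolynomial.monomial (Finsupp.single i 1) 1 * g) =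
      ∑ γ : ↥δ, φ g γ •
        φ (MvPolynomial.monomial ((γ : Fin n →₀ ℕ) + Finsupp.single i 1) 1) := by
    intro i g
    induction g using MvPolynomial.induction_on' with
    | monomial β c =>
      rw [MvPolynomial.monomial_mul, one_mul, add_comm]
      have hc : (MvPolynomial.monomial (β + Finsupp.single i 1) c : MvPolynomial (Fin n) B)
          = c • MvPolynomial.monomial (β + Finsupp.single i 1) 1 := by
        rw [MvPolynomial.smul_monomial, smul_eq_mul, mul_one]
      have hc' : (MvPolynomial.monomial β c : MvPolynomial (Fin n) B)
          = c • MvPolynomial.monomial β 1 := by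
        rw [MvPolynomial.smul_monomial, smul_eq_mul, mul_one]
      rw [hc, hc', map_smul, hmul β i, Finset.smul_sum]
      refine Finset.sum_congr rfl fun γ _ => ?_
      rw [map_smul]
      show c • ((φ (MvPolynomial.monomial β 1)) γ •
          φ (MvPolynomial.monomial ((γ : Fin n →₀ ℕ) + Finsupp.single i 1) 1)) =
        (c • φ (MvPolynomial.monomial β 1)) γ •
          φ (MvPolynomial.monomial ((γ : Fin n →₀ ℕ) + Finsupp.single i 1) 1)
      rw [Pi.smul_apply, smul_eq_mul, mul_smul]
    | add p q hp hq =>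
      rw [mul_add, map_add, hp, hq, map_add, ← Finset.sum_add_distrib]
      refine Finset.sum_congr rfl fun γ _ => ?_
      rw [Pi.add_apply, add_smul]
  -- key lemma
  have hkey : ∀ (α : Fin n →₀ ℕ) (f : MvPolynomial (Fin n) B),
      φ (MvPolynomial.monomial α 1 * f) =
      ∑ γ : ↥δ, φ f γ • φ (MvPolynomial.monomial ((γ : Fin n →₀ ℕ) + α) 1) := by
    intro α
    induction α using Finsupp.induction with
    | zero =>
      intro f
      have h1 : (MvPolynomial.monomial (0 : Fin n →₀ ℕ) 1 : MvPolynomial (Fin n) B) = 1 := by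
        simp [MvPolynomial.monomial_zero']
      rw [h1, one_mul]
      funext β
      rw [Finset.sum_apply]
      simp only [add_zero, hid, Pi.smul_apply, smul_eq_mul, mul_ite, mul_one, mul_zero]
      rw [Finset.sum_ite_eq Finset.univ β fun γ => φ f γ]
      simp
    | single_add i b α hi hb ih =>
      -- reduce to adding single i 1 repeatedly
      clear hi hb
      induction b with
      | zero => simpa using ih
      | succ b ihb =>
        intro f
        have hdecomp : Finsupp.single i (b + 1) + α
            = (Finsupp.single i b + α) + Finsupp.single i 1 := by
          rw [show (b + 1) = b + 1 from rfl, Finsupp.single_add]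
          abel
        rw [hdecomp]
        have hm : (MvPolynomial.monomial ((Finsupp.single i b + α) + Finsupp.single i 1) 1 :
            MvPolynomial (Fin n) B)
            = MvPolynomial.monomial (Finsupp.single i 1) 1 *
              MvPolynomial.monomial (Finsupp.single i b + α) 1 := by
          rw [MvPolynomial.monomial_mul, one_mul, add_comm]
        rw [hm, mul_assoc, hE, ]
        have : ∀ γ : ↥δ, φ (MvPolynomial.monomial (Finsupp.single i b + α) 1 * f) γ
            = ∑ β : ↥δ, φ f β *
              φ (MvPolynomial.monomial ((β : Fin n →₀ ℕ) + (Finsupp.single i b + α)) 1) γ := by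
          intro γ
          rw [ihb f, Finset.sum_apply]
          simp [Pi.smul_apply, smul_eq_mul]
        calc ∑ γ : ↥δ, φ (MvPolynomial.monomial (Finsupp.single i b + α) 1 * f) γ •
              φ (MvPolynomial.monomial ((γ : Fin n →₀ ℕ) + Finsupp.single i 1) 1)
            = ∑ γ : ↥δ, ∑ β : ↥δ, (φ f β *
                φ (MvPolynomial.monomial ((β : Fin n →₀ ℕ) + (Finsupp.single i b + α)) 1) γ) •
                φ (MvPolynomial.monomial ((γ : Fin n →₀ ℕ) + Finsupp.single i 1) 1) := by
              refine Finset.sum_congr rfl fun γ _ => ?_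
              rw [this γ, Finset.sum_smul]
          _ = ∑ β : ↥δ, φ f β •
                ∑ γ : ↥δ, φ (MvPolynomial.monomial ((β : Fin n →₀ ℕ) + (Finsupp.single i b + α)) 1) γ •
                φ (MvPolynomial.monomial ((γ : Fin n →₀ ℕ) + Finsupp.single i 1) 1) := by
              rw [Finset.sum_comm]
              refine Finset.sum_congr rfl fun β _ => ?_
              rw [Finset.smul_sum]
              refine Finset.sum_congr rfl fun γ _ => ?_
              rw [mul_smul]
          _ = ∑ β : ↥δ, φ f β •
                φ (MvPolynomial.monomial (((β : Fin n →₀ ℕ) + (Finsupp.single i b + α)) +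
                  Finsupp.single i 1) 1) := by
              refine Finset.sum_congr rfl fun β _ => ?_
              rw [← hmul]
          _ = ∑ β : ↥δ, φ f β •
                φ (MvPolynomial.monomial ((β : Fin n →₀ ℕ) +
                  ((Finsupp.single i b + α) + Finsupp.single i 1)) 1) := by
              refine Finset.sum_congr rfl fun β _ => ?_
              rw [add_assoc]
  constructor
  · intro f hf g
    rw [LinearMap.mem_ker] at hf ⊢
    induction g using MvPolynomial.induction_on' with
    | monomial α c =>
      have hmc : (MvPolynomial.monomial α c : MvPolynomial (Fin n) B)
          = c • MvPolynomial.monomial α 1 := by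
        rw [MvPolynomial.smul_monomial, smul_eq_mul, mul_one]
      have : (MvPolynomial.monomial α c : MvPolynomial (Fin n) B) * f
          = c • (MvPolynomial.monomial α 1 * f) := by
        rw [hmc, smul_mul_assoc]
      rw [this, map_smul, hkey, hf]
      simp
    | add p q hp hq =>
      rw [add_mul, map_add, hp, hq, add_zero]
  · have hsurj : Function.Surjective φ := by
      intro v
      refine ⟨∑ γ : ↥δ, v γ • MvPolynomial.monomial (γ : Fin n →₀ ℕ) 1, ?_⟩
      rw [map_sum]
      funext β
      rw [Finset.sum_apply]
      simp only [map_smul, hid, Pi.smul_apply, smul_eq_mul, mul_ite, mul_one, mul_zero]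
      rw [Finset.sum_ite_eq Finset.univ β v]
      simp
    refine ⟨φ.quotKerEquivOfSurjective hsurj, fun f => ?_⟩
    rfl
end

section
/- Let B be a commutative ring, δ a finite standard set, and (a_{α,β})_{α∈ℕ^n, β∈δ} a matrix over B with a_{α,β} = δ_{αβ} for α ∈ δ. Then the B-module homomorphism φ : B[x] → Bx^δ, φ(x^α) = Σ_β a_{α,β} x^β, has kernel an ideal of B[x] if and only if the structural equations a_{e_i+α,β} = Σ_{γ∈δ} a_{α,γ} a_{e_i+γ,β} hold for all α ∈ ℕ^n, all i ∈ {1,…,n}, and all β ∈ δ. -/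
theorem stmt12 {B : Type*} [CommRing B] {n : ℕ}
    (δ : Finset (Fin n →₀ ℕ))
    (hstd : ∀ α ∉ δ, ∀ γ : Fin n →₀ ℕ, α + γ ∉ δ)
    (a : (Fin n →₀ ℕ) → ↥δ → B)
    (haδ : ∀ (α : ↥δ) (β : ↥δ), a (α : Fin n →₀ ℕ) β = if β = α then 1 else 0)
    (φ : MvPolynomial (Fin n) B →ₗ[B] (↥δ → B))
    (hφ : ∀ α : Fin n →₀ ℕ, φ (MvPolynomial.monomial α 1) = a α) :
    (∀ f ∈ LinearMap.ker φ, ∀ g : MvPolynomial (Fin n) B, g * f ∈ LinearMap.ker φ) ↔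
    ∀ (α : Fin n →₀ ℕ) (i : Fin n) (β : ↥δ),
      a (α + Finsupp.single i 1) β =
        ∑ γ : ↥δ, a α γ * a ((γ : Fin n →₀ ℕ) + Finsupp.single i 1) β := by
  classical
  constructor
  · intro hker α i β
    set r : MvPolynomial (Fin n) B :=
      MvPolynomial.monomial α 1 - ∑ γ : ↥δ, a α γ • MvPolynomial.monomial (γ : Fin n →₀ ℕ) 1
      with hr_def
    have hr : r ∈ LinearMap.ker φ := by
      rw [LinearMap.mem_ker, hr_def, map_sub, map_sum, hφ]
      funext β'
      simp only [map_smul, hφ, Pi.sub_apply, Finset.sum_apply, Pi.smul_apply, smul_eq_mul,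
        haδ, Pi.zero_apply, mul_ite, mul_one, mul_zero]
      rw [Finset.sum_eq_single β' (by intro b _ hb; simp [Ne.symm hb]) (by simp)]
      simp
    have h2 := hker r hr (MvPolynomial.X i)
    rw [LinearMap.mem_ker] at h2
    have hXmul : ∀ σ : Fin n →₀ ℕ, MvPolynomial.X i * MvPolynomial.monomial σ (1 : B)
        = MvPolynomial.monomial (σ + Finsupp.single i 1) 1 := by
      intro σ
      rw [MvPolynomial.X, MvPolynomial.monomial_mul, one_mul, add_comm]
    have h3 : φ (MvPolynomial.X i * r) β = a (α + Finsupp.single i 1) β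
        - ∑ γ : ↥δ, a α γ * a ((γ : Fin n →₀ ℕ) + Finsupp.single i 1) β := by
      rw [hr_def, mul_sub, Finset.mul_sum, map_sub, map_sum, hXmul, hφ]
      simp only [mul_smul_comm, hXmul, map_smul, hφ, Pi.sub_apply, Finset.sum_apply,
        Pi.smul_apply, smul_eq_mul]
    rw [h2] at h3
    have h4 := h3.symm
    simpa [sub_eq_zero] using h4
  · intro heq
    have key : ∀ (i : Fin n) (f : MvPolynomial (Fin n) B),
        f ∈ LinearMap.ker φ → MvPolynomial.X i * f ∈ LinearMap.ker φ := by
      intro i f hf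
      have main : ∀ p : MvPolynomial (Fin n) B,
          φ (MvPolynomial.X i * p)
            = fun β => ∑ γ : ↥δ, φ p γ * a ((γ : Fin n →₀ ℕ) + Finsupp.single i 1) β := by
        intro p
        induction p using MvPolynomial.induction_on' with
        | monomial σ c =>
          have h1 : MvPolynomial.monomial σ c = c • MvPolynomial.monomial σ (1 : B) := by
            simp [MvPolynomial.smul_monomial]
          have hXmul : MvPolynomial.X i * MvPolynomial.monomial σ (1 : B)
              = MvPolynomial.monomial (σ + Finsupp.single i 1) 1 := by
            rw [MvPolynomial.X, MvPolynomial.monomial_mul, one_mul, add_comm]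
          rw [h1, mul_smul_comm, map_smul, map_smul, hXmul, hφ, hφ]
          funext β
          simp only [Pi.smul_apply, smul_eq_mul]
          rw [heq σ i β, Finset.mul_sum]
          apply Finset.sum_congr rfl
          intro γ _
          ring
        | add p q hp hq =>
          rw [mul_add, map_add, map_add, hp, hq]
          funext β
          simp [Finset.sum_add_distrib, add_mul]
      rw [LinearMap.mem_ker] at hf ⊢
      rw [main f]
      funext β
      simp [hf]
    suffices h : ∀ g : MvPolynomial (Fin n) B, ∀ f ∈ LinearMap.ker φ,
        g * f ∈ LinearMap.ker φ by
      exact fun f hf g => h g f hf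
    intro g
    induction g using MvPolynomial.induction_on with
    | C c =>
      intro f hf
      rw [MvPolynomial.C_mul']
      exact Submodule.smul_mem _ c hf
    | add p q hp hq =>
      intro f hf
      rw [add_mul]
      exact add_mem (hp f hf) (hq f hf)
    | mul_X p i hp =>
      intro f hf
      rw [mul_assoc]
      exact hp _ (key i f hf)
end

section
/- Let δ ⊆ ℕ^n be a finite standard set, and let α + λ = α' + λ' ∈ δ^{(2)} with α ≠ α' ∈ δ^{(1)} and λ ≠ λ' distinct standard basis vectors, where δ^{(1)} = ℬ(δ) and δ^{(2)} = ℬ(δ ∪ δ^{(1)}). Suppose α + λ is a corner of δ ∪ δ^{(1)} and lies in a coordinate plane ℕe_i ⊕ ℕe_j. If ε := α − λ' = α' − λ lies in ℕ^n but not in δ^{(1)}, then ε ∈ δ and ε is an edge point of δ (ε ∈ ℕλ ⊕ ℕλ', ε + λ ∉ δ, ε + λ' ∉ δ). -/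
theorem stmt14 {n : ℕ} (δ : Set (Fin n → ℕ)) (h : StdSet δ) (hfin : δ.Finite)
    (i j : Fin n) (hij : i ≠ j) (α α' ε : Fin n → ℕ)
    (hα : α ∈ StdBorder δ) (hα' : α' ∈ StdBorder δ) (hne : α ≠ α')
    (hsum : α + Pi.single i 1 = α' + Pi.single j 1)
    (hδ2 : α + Pi.single i 1 ∈ StdBorder (δ ∪ StdBorder δ))
    (hcorner : StdCorner (δ ∪ StdBorder δ) (α + Pi.single i 1))
    (hplane : ∀ k, k ≠ i → k ≠ j → ((α + Pi.single i 1 : Fin n → ℕ)) k = 0)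
    (hε : ε + Pi.single j 1 = α)
    (hεnot : ε ∉ StdBorder δ) :
    ε ∈ δ ∧ (∀ k, k ≠ i → k ≠ j → ε k = 0) ∧
      ε + Pi.single i 1 ∉ δ ∧ ε + Pi.single j 1 ∉ δ := by
  have hαδ : α ∉ δ := hα.1
  have hεi : ε ∈ δ := by
    by_contra hεδ
    have hmem : ε + Pi.single i 1 ∈ δ ∪ StdBorder δ := by
      apply hcorner.2 j
      rw [add_assoc, add_comm (Pi.single i 1), ← add_assoc, hε]
    rcases hmem with hmem | hmem
    · exact h ε hεδ (Pi.single i 1) hmem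
    · obtain ⟨hnot, k, β, hβδ, hβ⟩ := hmem
      by_cases hk : k = i
      · subst hk
        exact hεδ (add_right_cancel hβ ▸ hβδ)
      · have hβi : β i = ε i + 1 := by
          have := congrFun hβ i
          simpa [Pi.single_apply, hk] using this
        set γ : Fin n → ℕ := β - Pi.single i 1 with hγdef
        have hγβ : γ + Pi.single i 1 = β := by
          funext m
          by_cases hm : m = i
          · subst hm; simp [hγdef, hβi]
          · simp [hγdef, Pi.single_apply, hm]
        have hγδ : γ ∈ δ := by
          by_contra hγ
          exact h γ hγ (Pi.single i 1) (hγβ ▸ hβδ)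
        have hγε : γ + Pi.single k 1 = ε := by
          have : γ + Pi.single k 1 + Pi.single i 1 = ε + Pi.single i 1 := by
            rw [add_assoc, add_comm (Pi.single k 1), ← add_assoc, hγβ, hβ]
          exact add_right_cancel this
        exact hεnot ⟨hεδ, k, γ, hγδ, hγε⟩
  refine ⟨hεi, ?_, ?_, hε ▸ hαδ⟩
  · intro k hki hkj
    have h1 : ε k = α k := by
      have := congrFun hε k
      simpa [Pi.single_apply, hkj] using this
    have h2 := hplane k hki hkj
    simp only [Pi.add_apply, Pi.single_apply, hki, if_false, add_zero] at h2
    omega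
  · intro hc
    have : α + Pi.single i 1 ∈ StdBorder δ := by
      refine ⟨fun hm => hδ2.1 (Or.inl hm), j, ε + Pi.single i 1, hc, ?_⟩
      rw [add_assoc, add_comm (Pi.single i 1), ← add_assoc, hε]
    exact hδ2.1 (Or.inr this)
end

section
/- Assume there exists a linear map ℓ : ℤ^n → ℤ with ℓ(e_i) > 0 for all i and ℓ(α) > ℓ(β) for all α ∈ ℕ^n \ δ and β ∈ δ, where δ is a finite standard set. Define the order ≺_ℓ by α ≺_ℓ β iff ℓ(α) < ℓ(β), or ℓ(α) = ℓ(β) and α ≺ β for a fixed monomial order ≺. Then ≺_ℓ is a monomial order, and with respect to ≺_ℓ every α ∈ ℕ^n \ δ satisfies β ≺_ℓ α for all β ∈ δ. -/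
/-- A monomial order on ℕ^n: a total, transitive, irreflexive order compatible with
addition in which 0 is minimal. -/
structure MonOrd (n : ℕ) where
  lt : (Fin n → ℕ) → (Fin n → ℕ) → Prop
  lt_trans : ∀ {a b c}, lt a b → lt b c → lt a c
  lt_irrefl : ∀ a, ¬ lt a a
  lt_total : ∀ a b, lt a b ∨ a = b ∨ lt b a
  add_right : ∀ {a b} (c), lt a b → lt (a + c) (b + c)
  zero_min : ∀ a, a ≠ 0 → lt 0 a

theorem stmt15 {n : ℕ} (mo : MonOrd n) (δ : Set (Fin n → ℕ))
    (hstd : StdSet δ) (hfin : δ.Finite)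
    (l : (Fin n → ℤ) →ₗ[ℤ] ℤ)
    (hpos : ∀ i : Fin n, 0 < l (Pi.single i 1))
    (hsep : ∀ α ∉ δ, ∀ β ∈ δ,
      l (fun k => ((β : Fin n → ℕ) k : ℤ)) < l (fun k => ((α : Fin n → ℕ) k : ℤ))) :
    ∃ mo' : MonOrd n,
      (∀ a b : Fin n → ℕ, mo'.lt a b ↔
        (l (fun k => (a k : ℤ)) < l (fun k => (b k : ℤ)) ∨
          (l (fun k => (a k : ℤ)) = l (fun k => (b k : ℤ)) ∧ mo.lt a b))) ∧
      ∀ α ∉ δ, ∀ β ∈ δ, mo'.lt β α := by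
  set e : (Fin n → ℕ) → ℤ := fun a => l (fun k => (a k : ℤ)) with he
  have hadd : ∀ a b : Fin n → ℕ, e (a + b) = e a + e b := by
    intro a b
    have : (fun k => (((a + b) k : ℕ) : ℤ)) =
        (fun k => ((a k : ℕ) : ℤ)) + (fun k => ((b k : ℕ) : ℤ)) := by
      funext k; push_cast [Pi.add_apply]; ring
    simp only [he, this, map_add]
  have hepos : ∀ a : Fin n → ℕ, a ≠ 0 → 0 < e a := by
    intro a ha
    have hrep : e a = ∑ i, ((a i : ℤ)) • l (fun j => if i = j then 1 else 0) := by
      simpa using LinearMap.pi_apply_eq_sum_univ l (fun k => ((a k : ℕ) : ℤ))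
    have hsingle : ∀ i : Fin n, (fun j => if i = j then (1:ℤ) else 0) = Pi.single i 1 := by
      intro i; funext j; simp [Pi.single_apply, eq_comm]
    rw [hrep]
    obtain ⟨i, hi⟩ : ∃ i, a i ≠ 0 := by
      by_contra h; push_neg at h; exact ha (funext fun i => h i)
    apply Finset.sum_pos'
    · intro j _
      rw [hsingle j]
      exact smul_nonneg (by positivity) (hpos j).le
    · refine ⟨i, Finset.mem_univ i, ?_⟩
      rw [hsingle i]
      have : (0:ℤ) < (a i : ℤ) := by exact_mod_cast Nat.pos_of_ne_zero hi
      exact smul_pos this (hpos i)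
  have hzero : e 0 = 0 := by
    have : (fun k => (((0 : Fin n → ℕ) k : ℕ) : ℤ)) = (0 : Fin n → ℤ) := by
      funext k; simp
    simp only [he, this]; exact map_zero l
  refine ⟨⟨fun a b => e a < e b ∨ (e a = e b ∧ mo.lt a b), ?_, ?_, ?_, ?_, ?_⟩,
    fun a b => Iff.rfl, ?_⟩
  · rintro a b c (h1 | ⟨h1, h1'⟩) (h2 | ⟨h2, h2'⟩)
    · exact Or.inl (h1.trans h2)
    · exact Or.inl (h2 ▸ h1)
    · exact Or.inl (h1 ▸ h2)
    · exact Or.inr ⟨h1.trans h2, mo.lt_trans h1' h2'⟩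
  · rintro a (h | ⟨_, h⟩)
    · exact lt_irrefl _ h
    · exact mo.lt_irrefl a h
  · intro a b
    rcases lt_trichotomy (e a) (e b) with h | h | h
    · exact Or.inl (Or.inl h)
    · rcases mo.lt_total a b with h' | h' | h'
      · exact Or.inl (Or.inr ⟨h, h'⟩)
      · exact Or.inr (Or.inl h')
      · exact Or.inr (Or.inr (Or.inr ⟨h.symm, h'⟩))
    · exact Or.inr (Or.inr (Or.inl h))
  · rintro a b c (h | ⟨h, h'⟩)
    · exact Or.inl (by rw [hadd, hadd]; omega)
    · exact Or.inr ⟨by rw [hadd, hadd, h], mo.add_right c h'⟩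
  · intro a ha
    exact Or.inl (by rw [hzero]; exact hepos a ha)
  · intro α hα β hβ
    exact Or.inl (hsep α hα β hβ)
end

section
/- Let δ and ε be finite standard sets of the same size r, B a commutative ring, and I ⊆ B[x] an ideal such that both (x^β + I)_{β∈δ} and (x^ξ + I)_{ξ∈ε} are B-bases of B[x]/I. For α ∈ ε \ δ write x^α + Σ_{γ∈δ} d_{α,γ} x^γ ∈ I. Then the square matrix (d_{α,β})_{α ∈ ε\δ, β ∈ δ\ε} is invertible over B. -/
theorem stmt17 {B : Type*} [CommRing B] {n r : ℕ}
    (δ ε : Finset (Fin n →₀ ℕ))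
    (hδstd : ∀ α ∉ δ, ∀ γ : Fin n →₀ ℕ, α + γ ∉ δ)
    (hεstd : ∀ α ∉ ε, ∀ γ : Fin n →₀ ℕ, α + γ ∉ ε)
    (hδcard : δ.card = r) (hεcard : ε.card = r)
    (I : Ideal (MvPolynomial (Fin n) B))
    (hbasisδ : ∃ b : Module.Basis ↥δ B (MvPolynomial (Fin n) B ⧸ I),
      ∀ β : ↥δ, b β = Ideal.Quotient.mk I (MvPolynomial.monomial (β : Fin n →₀ ℕ) 1))
    (hbasisε : ∃ b : Module.Basis ↥ε B (MvPolynomial (Fin n) B ⧸ I),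
      ∀ ξ : ↥ε, b ξ = Ideal.Quotient.mk I (MvPolynomial.monomial (ξ : Fin n →₀ ℕ) 1))
    (d : (Fin n →₀ ℕ) → (Fin n →₀ ℕ) → B)
    (hd : ∀ α ∈ ε, α ∉ δ →
      (MvPolynomial.monomial α (1 : B) + ∑ γ ∈ δ, MvPolynomial.monomial γ (d α γ)) ∈ I)
    (M : Matrix ↥(ε \ δ) ↥(δ \ ε) B)
    (hM : ∀ (p : ↥(ε \ δ)) (q : ↥(δ \ ε)), M p q = d (p : Fin n →₀ ℕ) (q : Fin n →₀ ℕ)) :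
    ∃ N : Matrix ↥(δ \ ε) ↥(ε \ δ) B, M * N = 1 ∧ N * M = 1 := by
  classical
  obtain ⟨bδ, hbδ⟩ := hbasisδ
  obtain ⟨bε, hbε⟩ := hbasisε
  -- ambient coefficient functions
  set f : (Fin n →₀ ℕ) → (Fin n →₀ ℕ) → B := fun γ ξ =>
    if hγ : γ ∈ δ then if hξ : ξ ∈ ε then bδ.repr (bε ⟨ξ, hξ⟩) ⟨γ, hγ⟩ else 0 else 0
    with f_def
  set g : (Fin n →₀ ℕ) → (Fin n →₀ ℕ) → B := fun ξ γ =>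
    if hξ : ξ ∈ ε then if hγ : γ ∈ δ then bε.repr (bδ ⟨γ, hγ⟩) ⟨ξ, hξ⟩ else 0 else 0
    with g_def
  have hf : ∀ (ξ : Fin n →₀ ℕ) (hξ : ξ ∈ ε) (γ : Fin n →₀ ℕ) (hγ : γ ∈ δ),
      f γ ξ = bδ.repr (bε ⟨ξ, hξ⟩) ⟨γ, hγ⟩ := by
    intro ξ hξ γ hγ
    simp only [f_def, dif_pos hγ, dif_pos hξ]
  have hg : ∀ (ξ : Fin n →₀ ℕ) (hξ : ξ ∈ ε) (γ : Fin n →₀ ℕ) (hγ : γ ∈ δ),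
      g ξ γ = bε.repr (bδ ⟨γ, hγ⟩) ⟨ξ, hξ⟩ := by
    intro ξ hξ γ hγ
    simp only [g_def, dif_pos hξ, dif_pos hγ]
  -- value of f on monomials belonging to both
  have hboth : ∀ (ξ : Fin n →₀ ℕ) (hξε : ξ ∈ ε) (hξδ : ξ ∈ δ) (γ : Fin n →₀ ℕ) (hγ : γ ∈ δ),
      f γ ξ = if ξ = γ then 1 else 0 := by
    intro ξ hξε hξδ γ hγ
    have hb : bε ⟨ξ, hξε⟩ = bδ ⟨ξ, hξδ⟩ := by rw [hbε, hbδ]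
    rw [hf ξ hξε γ hγ, hb, Module.Basis.repr_self, Finsupp.single_apply]
    by_cases h : ξ = γ
    · rw [if_pos h, if_pos (Subtype.ext h)]
    · rw [if_neg h, if_neg (fun hc => h (Subtype.ext_iff.1 hc))]
  -- value of g on monomials belonging to both
  have hgboth : ∀ (ξ' : Fin n →₀ ℕ) (hξ' : ξ' ∈ ε) (γ : Fin n →₀ ℕ) (hγε : γ ∈ ε)
      (hγδ : γ ∈ δ), g ξ' γ = if ξ' = γ then 1 else 0 := by
    intro ξ' hξ' γ hγε hγδ
    have hb : bδ ⟨γ, hγδ⟩ = bε ⟨γ, hγε⟩ := by rw [hbε, hbδ]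
    rw [hg ξ' hξ' γ hγδ, hb, Module.Basis.repr_self, Finsupp.single_apply]
    by_cases h : ξ' = γ
    · rw [if_pos h, if_pos (Subtype.ext h.symm)]
    · rw [if_neg h, if_neg (fun hc => h (Subtype.ext_iff.1 hc).symm)]
  -- value of f on monomials in ε \ δ
  have hnew : ∀ (ξ : Fin n →₀ ℕ) (hξε : ξ ∈ ε) (hξδ : ξ ∉ δ) (γ : Fin n →₀ ℕ) (hγ : γ ∈ δ),
      f γ ξ = - d ξ γ := by
    intro ξ hξε hξδ γ hγ
    have h1 : bε ⟨ξ, hξε⟩ = ∑ γ' : ↥δ, (- d ξ ↑γ') • bδ γ' := by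
      rw [hbε]
      have h2 : (Ideal.Quotient.mk I) (MvPolynomial.monomial ξ (1:B))
          = - ∑ γ' ∈ δ, (Ideal.Quotient.mk I) (MvPolynomial.monomial γ' (d ξ γ')) := by
        have h0 := (Ideal.Quotient.eq_zero_iff_mem).2 (hd ξ hξε hξδ)
        rw [map_add, map_sum] at h0
        exact eq_neg_of_add_eq_zero_left h0
      rw [h2, ← Finset.sum_attach δ
        (fun γ' => (Ideal.Quotient.mk I) (MvPolynomial.monomial γ' (d ξ γ'))),
        ← Finset.sum_neg_distrib, Finset.univ_eq_attach]
      apply Finset.sum_congr rfl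
      intro γ' _
      rw [hbδ, neg_smul, ← Ideal.Quotient.mkₐ_eq_mk B I, ← map_smul,
        MvPolynomial.smul_monomial, smul_eq_mul, mul_one]
    rw [hf ξ hξε γ hγ, h1, Module.Basis.repr_sum_self]
  -- orthogonality relations
  have orth1 : ∀ (ξ : Fin n →₀ ℕ) (hξ : ξ ∈ ε) (ξ' : Fin n →₀ ℕ) (hξ' : ξ' ∈ ε),
      ∑ γ ∈ δ, g ξ' γ * f γ ξ = if ξ' = ξ then 1 else 0 := by
    intro ξ hξ ξ' hξ'
    have h1 : (bε.toMatrix ⇑bδ * bδ.toMatrix ⇑bε) ⟨ξ', hξ'⟩ ⟨ξ, hξ⟩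
        = (1 : Matrix ↥ε ↥ε B) ⟨ξ', hξ'⟩ ⟨ξ, hξ⟩ := by
      rw [Module.Basis.toMatrix_mul_toMatrix, Module.Basis.toMatrix_self]
    rw [Matrix.mul_apply, Matrix.one_apply] at h1
    have hsum : ∑ γ ∈ δ, g ξ' γ * f γ ξ
        = ∑ γ : ↥δ, bε.toMatrix ⇑bδ ⟨ξ', hξ'⟩ γ * bδ.toMatrix ⇑bε γ ⟨ξ, hξ⟩ := by
      rw [Finset.univ_eq_attach, ← Finset.sum_attach δ (fun γ => g ξ' γ * f γ ξ)]
      refine Finset.sum_congr rfl fun γ _ => ?_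
      rw [Module.Basis.toMatrix_apply, Module.Basis.toMatrix_apply, hf ξ hξ ↑γ γ.2, hg ξ' hξ' ↑γ γ.2]
    rw [hsum, h1]
    by_cases h : ξ' = ξ
    · rw [if_pos (Subtype.ext h), if_pos h]
    · rw [if_neg (fun hc => h (Subtype.ext_iff.1 hc)), if_neg h]
  have orth2 : ∀ (γ : Fin n →₀ ℕ) (hγ : γ ∈ δ) (γ' : Fin n →₀ ℕ) (hγ' : γ' ∈ δ),
      ∑ ξ ∈ ε, f γ' ξ * g ξ γ = if γ' = γ then 1 else 0 := by
    intro γ hγ γ' hγ'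
    have h1 : (bδ.toMatrix ⇑bε * bε.toMatrix ⇑bδ) ⟨γ', hγ'⟩ ⟨γ, hγ⟩
        = (1 : Matrix ↥δ ↥δ B) ⟨γ', hγ'⟩ ⟨γ, hγ⟩ := by
      rw [Module.Basis.toMatrix_mul_toMatrix, Module.Basis.toMatrix_self]
    rw [Matrix.mul_apply, Matrix.one_apply] at h1
    have hsum : ∑ ξ ∈ ε, f γ' ξ * g ξ γ
        = ∑ ξ : ↥ε, bδ.toMatrix ⇑bε ⟨γ', hγ'⟩ ξ * bε.toMatrix ⇑bδ ξ ⟨γ, hγ⟩ := by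
      rw [Finset.univ_eq_attach, ← Finset.sum_attach ε (fun ξ => f γ' ξ * g ξ γ)]
      refine Finset.sum_congr rfl fun ξ _ => ?_
      rw [Module.Basis.toMatrix_apply, Module.Basis.toMatrix_apply, hf ↑ξ ξ.2 γ' hγ', hg ↑ξ ξ.2 γ hγ]
    rw [hsum, h1]
    by_cases h : γ' = γ
    · rw [if_pos (Subtype.ext h), if_pos h]
    · rw [if_neg (fun hc => h (Subtype.ext_iff.1 hc)), if_neg h]
  -- define the candidate inverse
  set N : Matrix ↥(δ \ ε) ↥(ε \ δ) B := Matrix.of fun q p => - g ↑p ↑q with N_def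
  refine ⟨N, ?_, ?_⟩
  · ext p p'
    have hpε : (p : Fin n →₀ ℕ) ∈ ε := (Finset.mem_sdiff.1 p.2).1
    have hpδ : (p : Fin n →₀ ℕ) ∉ δ := (Finset.mem_sdiff.1 p.2).2
    have hp'ε : (p' : Fin n →₀ ℕ) ∈ ε := (Finset.mem_sdiff.1 p'.2).1
    have hp'δ : (p' : Fin n →₀ ℕ) ∉ δ := (Finset.mem_sdiff.1 p'.2).2
    have step1 : (M * N) p p'
        = ∑ q ∈ δ \ ε, g ↑p' q * f q ↑p := by
      rw [Matrix.mul_apply, Finset.univ_eq_attach,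
        ← Finset.sum_attach (δ \ ε) (fun q => g ↑p' q * f q ↑p)]
      apply Finset.sum_congr rfl
      intro q _
      have hqδ : (q : Fin n →₀ ℕ) ∈ δ := (Finset.mem_sdiff.1 q.2).1
      rw [hM, N_def, Matrix.of_apply, hnew ↑p hpε hpδ ↑q hqδ]
      ring
    have step2 : ∑ q ∈ δ \ ε, g ↑p' q * f q ↑p = ∑ q ∈ δ, g ↑p' q * f q ↑p := by
      apply Finset.sum_subset Finset.sdiff_subset
      intro q hqδ hqns
      have hqε : q ∈ ε := by
        by_contra hq
        exact hqns (Finset.mem_sdiff.2 ⟨hqδ, hq⟩)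
      rw [hgboth ↑p' hp'ε q hqε hqδ,
        if_neg (fun hc => hp'δ (by rw [hc]; exact hqδ)), zero_mul]
    rw [step1, step2, orth1 ↑p hpε ↑p' hp'ε, Matrix.one_apply]
    by_cases h : p = p'
    · rw [if_pos (congrArg Subtype.val h.symm), if_pos h]
    · rw [if_neg (fun hc => h (Subtype.ext hc.symm)), if_neg h]
  · ext q q'
    have hqδ : (q : Fin n →₀ ℕ) ∈ δ := (Finset.mem_sdiff.1 q.2).1
    have hqε : (q : Fin n →₀ ℕ) ∉ ε := (Finset.mem_sdiff.1 q.2).2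
    have hq'δ : (q' : Fin n →₀ ℕ) ∈ δ := (Finset.mem_sdiff.1 q'.2).1
    have hq'ε : (q' : Fin n →₀ ℕ) ∉ ε := (Finset.mem_sdiff.1 q'.2).2
    have step1 : (N * M) q q'
        = ∑ p ∈ ε \ δ, f ↑q' p * g p ↑q := by
      rw [Matrix.mul_apply, Finset.univ_eq_attach,
        ← Finset.sum_attach (ε \ δ) (fun p => f ↑q' p * g p ↑q)]
      apply Finset.sum_congr rfl
      intro p _
      have hpε : (p : Fin n →₀ ℕ) ∈ ε := (Finset.mem_sdiff.1 p.2).1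
      have hpδ : (p : Fin n →₀ ℕ) ∉ δ := (Finset.mem_sdiff.1 p.2).2
      rw [hM, N_def, Matrix.of_apply, hnew ↑p hpε hpδ ↑q' hq'δ]
      ring
    have step2 : ∑ p ∈ ε \ δ, f ↑q' p * g p ↑q = ∑ p ∈ ε, f ↑q' p * g p ↑q := by
      apply Finset.sum_subset Finset.sdiff_subset
      intro p hpε hpns
      have hpδ : p ∈ δ := by
        by_contra hp
        exact hpns (Finset.mem_sdiff.2 ⟨hpε, hp⟩)
      rw [hboth p hpε hpδ ↑q' hq'δ,
        if_neg (fun hc => hq'ε (by rw [← hc]; exact hpε)), zero_mul]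
    rw [step1, step2, orth2 ↑q hqδ ↑q' hq'δ, Matrix.one_apply]
    by_cases h : q = q'
    · rw [if_pos (congrArg Subtype.val h.symm), if_pos h]
    · rw [if_neg (fun hc => h (Subtype.ext hc.symm)), if_neg h]
end

section
/- Let F be a field with at least r elements, δ ⊆ ℕ^n a finite standard set of size r, and choose an injection η : {0,…,r−1} → F, inducing η^n : {0,…,r−1}^n → F^n. Let E = η^n(δ) ⊆ F^n (assuming δ ⊆ {0,…,r−1}^n) and let I ⊆ F[x] be the vanishing ideal of the finite set E. Then the residue classes (x^β + I)_{β∈δ} form an F-basis of F[x]/I; equivalently, the evaluation matrix (p^β)_{p ∈ E, β ∈ δ} is invertible. -/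
open MvPolynomial Finset

lemma aux_support_lin {F : Type*} [Field F] {n : ℕ} (i : Fin n) (a : F)
    (q : Fin n →₀ ℕ) (hq : q ∈ (X i - C a : MvPolynomial (Fin n) F).support) :
    q = Finsupp.single i 1 ∨ q = 0 := by
  classical
  by_contra h
  push_neg at h
  rw [mem_support_iff, coeff_sub, coeff_X', coeff_C] at hq
  rw [if_neg (fun h0 => h.1 h0.symm), if_neg (fun h0 => h.2 h0.symm)] at hq
  simp at hq

lemma aux_support_prodlin {F : Type*} [Field F] {n : ℕ} (i : Fin n) (η : ℕ → F) (m : ℕ) :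
    ∀ q ∈ (∏ j ∈ Finset.range m, (X i - C (η j)) : MvPolynomial (Fin n) F).support,
      ∃ k ≤ m, q = Finsupp.single i k := by
  classical
  induction m with
  | zero =>
    intro q hq
    rw [Finset.range_zero, Finset.prod_empty, mem_support_iff, coeff_one] at hq
    refine ⟨0, le_refl 0, ?_⟩
    rw [Finsupp.single_zero]
    by_contra h
    rw [if_neg (fun h0 => h h0.symm)] at hq
    exact hq rfl
  | succ m ih =>
    intro q hq
    rw [Finset.prod_range_succ] at hq
    obtain ⟨q1, hq1, q2, hq2, rfl⟩ := Finset.mem_add.mp (support_mul _ _ hq)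
    obtain ⟨k, hk, rfl⟩ := ih q1 hq1
    rcases aux_support_lin i (η m) q2 hq2 with h | h
    · exact ⟨k + 1, by omega, by rw [h, Finsupp.single_add]⟩
    · exact ⟨k, by omega, by rw [h, add_zero]⟩

lemma aux_support_g {F : Type*} [Field F] {n : ℕ} (η : ℕ → F) (β : Fin n →₀ ℕ)
    (s : Finset (Fin n)) :
    ∀ q ∈ (∏ i ∈ s, ∏ j ∈ Finset.range (β i), (X i - C (η j)) : MvPolynomial (Fin n) F).support,
      ∀ k : Fin n, q k ≤ if k ∈ s then β k else 0 := by
  classical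
  induction s using Finset.induction_on with
  | empty =>
    intro q hq k
    rw [Finset.prod_empty, mem_support_iff, coeff_one] at hq
    by_cases h : q = 0
    · simp [h]
    · rw [if_neg (fun h0 => h h0.symm)] at hq; exact absurd rfl hq
  | @insert a s hna ih =>
    intro q hq k
    rw [Finset.prod_insert hna] at hq
    obtain ⟨q1, hq1, q2, hq2, rfl⟩ := Finset.mem_add.mp (support_mul _ _ hq)
    obtain ⟨m, hm, rfl⟩ := aux_support_prodlin a η (β a) q1 hq1
    have h2 := ih q2 hq2 k
    rw [Finsupp.add_apply, Finsupp.single_apply]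
    by_cases hk : k = a
    · subst hk
      rw [if_pos rfl, if_pos (Finset.mem_insert_self k s), if_neg hna] at *
      omega
    · rw [if_neg (fun h => hk h.symm)]
      by_cases hks : k ∈ s
      · rw [if_pos hks] at h2; rw [if_pos (Finset.mem_insert_of_mem hks)]; omega
      · rw [if_neg hks] at h2
        rw [if_neg (by simp [hk, hks])]
        omega

theorem stmt18 {F : Type*} [Field F] {n r : ℕ}
    (δ : Finset (Fin n →₀ ℕ))
    (hstd : ∀ α ∉ δ, ∀ γ : Fin n →₀ ℕ, α + γ ∉ δ)
    (hcard : δ.card = r)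
    (hbound : ∀ α ∈ δ, ∀ i : Fin n, (α : Fin n →₀ ℕ) i < r)
    (η : ℕ → F) (hη : Set.InjOn η (Set.Iio r))
    (I : Ideal (MvPolynomial (Fin n) F))
    (hI : ∀ f : MvPolynomial (Fin n) F,
      f ∈ I ↔ ∀ α ∈ δ, MvPolynomial.eval (fun i => η ((α : Fin n →₀ ℕ) i)) f = 0) :
    (∃ b : Module.Basis ↥δ F (MvPolynomial (Fin n) F ⧸ I),
      ∀ β : ↥δ, b β = Ideal.Quotient.mk I (MvPolynomial.monomial (β : Fin n →₀ ℕ) 1)) ∧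
    Matrix.det (Matrix.of fun p q : ↥δ =>
      ∏ i : Fin n, η ((p : Fin n →₀ ℕ) i) ^ ((q : Fin n →₀ ℕ) i)) ≠ 0 := by
  classical
  set pt : (Fin n →₀ ℕ) → (Fin n → F) := fun α i => η (α i) with hpt
  set M : Matrix ↥δ ↥δ F :=
    Matrix.of (fun p q : ↥δ => ∏ i : Fin n, η ((p : Fin n →₀ ℕ) i) ^ ((q : Fin n →₀ ℕ) i))
    with hMdef
  set g : (Fin n →₀ ℕ) → MvPolynomial (Fin n) F :=
    fun β => ∏ i : Fin n, ∏ j ∈ Finset.range (β i), (X i - C (η j)) with hg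
  -- support of g β is within δ
  have hgsupp : ∀ β ∈ δ, ∀ q ∈ (g β).support, q ∈ δ := by
    intro β hβ q hq
    have hle : ∀ k, q k ≤ β k := by
      intro k
      have := aux_support_g η β Finset.univ q hq k
      simpa using this
    by_contra hqδ
    have : q + (β - q) = β := by
      ext k
      have := hle k
      simp only [Finsupp.add_apply, Finsupp.tsub_apply]
      omega
    exact hstd q hqδ (β - q) (by rw [this]; exact hβ)
  -- evaluation of g
  have hevalg : ∀ α β : Fin n →₀ ℕ,
      eval (pt α) (g β) = ∏ i : Fin n, ∏ j ∈ Finset.range (β i), (η (α i) - η j) := by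
    intro α β
    simp [hg, hpt]
  set C' : Matrix ↥δ ↥δ F := Matrix.of (fun q β : ↥δ => coeff (q : Fin n →₀ ℕ) (g β)) with hC'
  have hMC : ∀ α β : ↥δ, (M * C') α β = eval (pt ↑α) (g ↑β) := by
    intro α β
    rw [Matrix.mul_apply, eval_eq']
    have h1 : ∑ j : ↥δ, M α j * C' j β
        = ∑ d ∈ δ, coeff d (g ↑β) * ∏ i, pt (↑α) i ^ d i := by
      rw [← Finset.sum_coe_sort δ (fun d => coeff d (g ↑β) * ∏ i, pt (↑α) i ^ d i)]
      refine Finset.sum_congr rfl fun q _ => ?_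
      simp only [hMdef, hC', Matrix.of_apply, hpt]
      ring
    rw [h1]
    refine (Finset.sum_subset (fun d hd => hgsupp ↑β β.2 d hd) ?_).symm
    intro d _ hd
    rw [notMem_support_iff.mp hd, zero_mul]
  have hN0 : ∀ α β : ↥δ, ¬((β : Fin n →₀ ℕ) ≤ (α : Fin n →₀ ℕ)) → (M * C') α β = 0 := by
    intro α β hle
    rw [hMC, hevalg]
    rw [Finsupp.le_def] at hle; push_neg at hle
    obtain ⟨i, hi⟩ := hle
    refine Finset.prod_eq_zero (Finset.mem_univ i) ?_
    refine Finset.prod_eq_zero (Finset.mem_range.mpr hi) ?_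
    simp [hpt]
  have hdiagN : ∀ β : ↥δ, (M * C') β β ≠ 0 := by
    intro β
    rw [hMC, hevalg]
    refine Finset.prod_ne_zero_iff.mpr fun i _ => Finset.prod_ne_zero_iff.mpr fun j hj => ?_
    rw [Finset.mem_range] at hj
    have hb := hbound ↑β β.2 i
    intro h0
    have := hη (Set.mem_Iio.mpr hb) (Set.mem_Iio.mpr (lt_trans hj hb)) (sub_eq_zero.mp h0)
    omega
  -- reindex by Fin (δ.card) ordered via lex
  set δL : Finset (Lex (Fin n →₀ ℕ)) := δ.map ⟨toLex, toLex.injective⟩ with hδL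
  have hcardL : δL.card = δ.card := Finset.card_map _
  set e0 : Fin δ.card ≃o ↥δL := δL.orderIsoOfFin hcardL with he0
  set e1 : ↥δL ≃ ↥δ :=
    { toFun := fun x => ⟨ofLex ↑x, (Finset.mem_map' ⟨toLex, toLex.injective⟩).mp x.2⟩
      invFun := fun y => ⟨toLex ↑y, (Finset.mem_map' ⟨toLex, toLex.injective⟩).mpr y.2⟩
      left_inv := fun x => rfl
      right_inv := fun y => rfl } with he1
  set e : Fin δ.card ≃ ↥δ := e0.toEquiv.trans e1 with hee
  have hecoe : ∀ a : Fin δ.card, toLex ((e a : Fin n →₀ ℕ)) = ↑(e0 a) := fun a => rfl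
  have htri : ∀ a b : Fin δ.card, a < b → ((M * C').submatrix e e) a b = 0 := by
    intro a b h
    refine hN0 (e a) (e b) fun hle => ?_
    have h2 : toLex ((e b : Fin n →₀ ℕ)) ≤ toLex ((e a : Fin n →₀ ℕ)) :=
      Finsupp.toLex_monotone hle
    rw [hecoe, hecoe] at h2
    have h3 : (e0 a : Lex (Fin n →₀ ℕ)) < ↑(e0 b) :=
      Subtype.coe_lt_coe.mpr (e0.lt_iff_lt.mpr h)
    exact absurd h2 (not_le.mpr h3)
  have htri' : ((M * C').submatrix e e).BlockTriangular OrderDual.toDual :=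
    fun i j hij => htri i j (OrderDual.toDual_lt_toDual.mp hij)
  have hdetN : (M * C').det ≠ 0 := by
    rw [← Matrix.det_submatrix_equiv_self e (M * C'),
      Matrix.det_of_lowerTriangular ((M * C').submatrix e e) htri']
    exact Finset.prod_ne_zero_iff.mpr fun i _ => hdiagN (e i)
  have hdetM : M.det ≠ 0 := by
    intro h
    exact hdetN (by rw [Matrix.det_mul, h, zero_mul])
  -- linear independence of monomials in the quotient
  set v : ↥δ → MvPolynomial (Fin n) F ⧸ I :=
    fun β => Ideal.Quotient.mk I (monomial (β : Fin n →₀ ℕ) 1) with hv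
  have hsm : ∀ (x : MvPolynomial (Fin n) F) (a : F),
      Ideal.Quotient.mk I (a • x) = a • Ideal.Quotient.mk I x := by
    intro x a
    have := map_smul (Ideal.Quotient.mkₐ F I) a x
    rwa [Ideal.Quotient.mkₐ_eq_mk] at this
  have hli : LinearIndependent F v := by
    rw [Fintype.linearIndependent_iff]
    intro c hc
    have hf : (∑ q : ↥δ, monomial (q : Fin n →₀ ℕ) (c q)) ∈ I := by
      rw [← Ideal.Quotient.eq_zero_iff_mem, map_sum, ← hc]
      refine Finset.sum_congr rfl fun q _ => ?_
      rw [hv, ← hsm, smul_monomial, smul_eq_mul, mul_one]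
    have hmv : M.mulVec c = 0 := by
      funext α
      have h0 := (hI _).mp hf ↑α α.2
      rw [map_sum] at h0
      simp only [eval_monomial, Finsupp.prod_pow] at h0
      simp only [Matrix.mulVec, dotProduct, hMdef, Matrix.of_apply, Pi.zero_apply]
      rw [← h0]
      exact Finset.sum_congr rfl fun q _ => mul_comm _ _
    intro i
    have := Matrix.eq_zero_of_mulVec_eq_zero hdetM hmv
    exact congrFun this i
  -- the evaluation algebra map and injectivity on the quotient
  have hae : ∀ (x : Fin n → F) (f : MvPolynomial (Fin n) F), aeval x f = eval x f := by
    intro x f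
    exact DFunLike.congr_fun (MvPolynomial.coe_aeval_eq_eval x) f
  set ev : MvPolynomial (Fin n) F →ₐ[F] (↥δ → F) :=
    Pi.algHom F _ (fun α : ↥δ => aeval (pt ↑α)) with hev
  have hev0 : ∀ f ∈ I, ev f = 0 := by
    intro f hf
    funext α
    simp only [hev, Pi.algHom_apply, hae, Pi.zero_apply]
    exact (hI f).mp hf ↑α α.2
  set Φ : (MvPolynomial (Fin n) F ⧸ I) →ₐ[F] (↥δ → F) :=
    Ideal.Quotient.liftₐ I ev hev0 with hΦ
  have hΦinj : Function.Injective Φ := by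
    refine (injective_iff_map_eq_zero _).mpr ?_
    intro a ha
    obtain ⟨f, rfl⟩ := Ideal.Quotient.mk_surjective a
    rw [Ideal.Quotient.eq_zero_iff_mem, hI]
    intro α hα
    have h1 : Φ (Ideal.Quotient.mk I f) = ev f := Ideal.Quotient.liftₐ_apply I ev hev0 _
    rw [ha] at h1
    have h2 := congrFun h1.symm ⟨α, hα⟩
    simp only [hev, Pi.algHom_apply, hae, Pi.zero_apply] at h2
    exact h2
  haveI : FiniteDimensional F (MvPolynomial (Fin n) F ⧸ I) :=
    FiniteDimensional.of_injective Φ.toLinearMap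
      (show Function.Injective ⇑Φ.toLinearMap from hΦinj)
  have hfr : Fintype.card ↥δ = Module.finrank F (MvPolynomial (Fin n) F ⧸ I) := by
    refine le_antisymm hli.fintype_card_le_finrank ?_
    have h1 := LinearMap.finrank_le_finrank_of_injective
        (show Function.Injective ⇑Φ.toLinearMap from hΦinj)
    rwa [Module.finrank_pi F] at h1
  refine ⟨?_, hdetM⟩
  rcases isEmpty_or_nonempty ↥δ with he | hne
  · have hItop : I = ⊤ := by
      rw [eq_top_iff]
      intro f _
      exact (hI f).mpr fun α hα => absurd hα (Finset.isEmpty_coe_sort.mp he ▸ Finset.notMem_empty α)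
    haveI : Subsingleton (MvPolynomial (Fin n) F ⧸ I) :=
      Submodule.Quotient.subsingleton_iff.mpr (by rw [hItop])
    exact ⟨Module.Basis.empty _, fun β => he.elim β⟩
  · refine ⟨basisOfLinearIndependentOfCardEqFinrank hli hfr, fun β => ?_⟩
    rw [coe_basisOfLinearIndependentOfCardEqFinrank]
end

section
/- For the standard set δ = {0, e_1, 2e_1, …, (r−1)e_1} ⊆ ℕ^2 and a commutative ring B, giving a B-algebra structure on the free module Bx^δ together with a surjection φ : B[x_1,x_2] → Bx^δ with φ(x^β) = x^β for β ∈ δ is equivalent to freely choosing the 2r coefficients a_{(r,0),β} and a_{(0,1),β} (β ∈ δ): the structural equations determine all other a_{α,β} and impose no further constraints. Hence the border basis scheme Hilb^δ is isomorphic to affine space 𝔸^{2r}. -/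
namespace S19
variable {B : Type*} [CommRing B] {r : ℕ} {δ : Finset (Fin 2 →₀ ℕ)}

section
variable (hδ : ∀ α : Fin 2 →₀ ℕ, α ∈ δ ↔ ∃ k < r, α = Finsupp.single (0 : Fin 2) k)
include hδ

noncomputable def mk (k : ℕ) (hk : k < r) : ↥δ := ⟨Finsupp.single 0 k, (hδ _).2 ⟨k, hk, rfl⟩⟩

lemma val_eq (β : ↥δ) : (β : Fin 2 →₀ ℕ) = Finsupp.single 0 ((β : Fin 2 →₀ ℕ) 0) := by
  obtain ⟨k, hk, h⟩ := (hδ _).1 β.2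
  rw [h, Finsupp.single_eq_same]

lemma val_lt (β : ↥δ) : (β : Fin 2 →₀ ℕ) 0 < r := by
  obtain ⟨k, hk, h⟩ := (hδ _).1 β.2
  rw [h, Finsupp.single_eq_same]; exact hk

lemma val1 (β : ↥δ) : (β : Fin 2 →₀ ℕ) 1 = 0 := by
  rw [val_eq hδ β]
  exact Finsupp.single_eq_of_ne (by decide)

lemma ext0 {β γ : ↥δ} (h : (β : Fin 2 →₀ ℕ) 0 = (γ : Fin 2 →₀ ℕ) 0) : β = γ := by
  apply Subtype.ext
  rw [val_eq hδ β, val_eq hδ γ, h]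

lemma idx_mk (k : ℕ) (hk : k < r) : ((mk hδ k hk : ↥δ) : Fin 2 →₀ ℕ) 0 = k :=
  Finsupp.single_eq_same

end

omit [CommRing B] in
lemma decomp (α : Fin 2 →₀ ℕ) :
    α = Finsupp.single 0 (α 0) + Finsupp.single 1 (α 1) := by
  ext i
  fin_cases i <;> simp [Finsupp.single_apply]


/-- companion-type matrix -/
noncomputable def C (r' : ℕ) (w : ↥δ → B) : Matrix ↥δ ↥δ B := fun β γ =>
  if (β : Fin 2 →₀ ℕ) 0 + 1 < r' then (if (γ : Fin 2 →₀ ℕ) 0 = (β : Fin 2 →₀ ℕ) 0 + 1 then 1 else 0)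
  else w γ

/-- matrix with rows v Cᵏ -/
noncomputable def Dm (r' : ℕ) (w v : ↥δ → B) : Matrix ↥δ ↥δ B := fun β γ =>
  ∑ k, v k * (C r' w ^ ((β : Fin 2 →₀ ℕ) 0)) k γ

section
variable (hδ : ∀ α : Fin 2 →₀ ℕ, α ∈ δ ↔ ∃ k < r, α = Finsupp.single (0 : Fin 2) k)
  (hr : 0 < r) (w v : ↥δ → B)
include hδ hr

-- L1
lemma pow_row0 (m : ℕ) (hm : m < r) (γ : ↥δ) :
    (C r w ^ m) (mk hδ 0 hr) γ = if (γ : Fin 2 →₀ ℕ) 0 = m then 1 else 0 := by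
  induction m generalizing γ with
  | zero =>
    rw [pow_zero, Matrix.one_apply]
    by_cases h : (γ : Fin 2 →₀ ℕ) 0 = 0
    · rw [if_pos (ext0 hδ (by rw [h, idx_mk])).symm, if_pos h]
    · rw [if_neg, if_neg h]
      intro he; exact h (by rw [← he]; exact idx_mk hδ 0 hr)
  | succ m ih =>
    have hm' : m < r := Nat.lt_of_succ_lt hm
    rw [pow_succ, Matrix.mul_apply]
    rw [Finset.sum_eq_single (mk hδ m hm')]
    · rw [ih hm', if_pos (idx_mk hδ m hm'), one_mul, C,
        if_pos (by rw [idx_mk]; exact hm), idx_mk]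
    · intro b _ hb
      rw [ih hm', if_neg, zero_mul]
      intro he; exact hb (ext0 hδ (by rw [he, idx_mk]))
    · intro h; exact absurd (Finset.mem_univ _) h

-- L2
lemma pow_row0_succ (m : ℕ) (hm : m < r) (γ : ↥δ) :
    (C r w ^ (m + 1)) (mk hδ 0 hr) γ = C r w (mk hδ m hm) γ := by
  rw [pow_succ, Matrix.mul_apply, Finset.sum_eq_single (mk hδ m hm)]
  · rw [pow_row0 hδ hr w m hm, if_pos (idx_mk hδ m hm), one_mul]
  · intro b _ hb
    rw [pow_row0 hδ hr w m hm, if_neg, zero_mul]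
    intro he; exact hb (ext0 hδ (by rw [he, idx_mk]))
  · intro h; exact absurd (Finset.mem_univ _) h

-- L3
lemma pow_r_row0 (γ : ↥δ) : (C r w ^ r) (mk hδ 0 hr) γ = w γ := by
  rw [show (C r w ^ r) = C r w ^ ((r-1)+1) by congr 1; omega,
    pow_row0_succ hδ hr w (r-1) (by omega), C, if_neg (by rw [idx_mk]; omega)]

-- L4
lemma pow_r_add (i : ℕ) (γ : ↥δ) :
    (C r w ^ (r + i)) (mk hδ 0 hr) γ
      = ∑ k, w k * (C r w ^ ((k : Fin 2 →₀ ℕ) 0 + i)) (mk hδ 0 hr) γ := by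
  induction i generalizing γ with
  | zero =>
    simp only [add_zero]
    rw [pow_r_row0 hδ hr w γ, Finset.sum_eq_single γ]
    · rw [pow_row0 hδ hr w _ (val_lt hδ γ), if_pos rfl, mul_one]
    · intro b _ hb
      rw [pow_row0 hδ hr w _ (val_lt hδ b), if_neg, mul_zero]
      intro he; exact hb (ext0 hδ he.symm)
    · intro h; exact absurd (Finset.mem_univ _) h
  | succ i ih =>
    have : r + (i + 1) = (r + i) + 1 := by ring
    rw [this, pow_succ, Matrix.mul_apply]
    have : ∀ j : ↥δ, (C r w ^ (r + i)) (mk hδ 0 hr) j * C r w j γ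
        = ∑ k, w k * ((C r w ^ ((k : Fin 2 →₀ ℕ) 0 + i)) (mk hδ 0 hr) j * C r w j γ) := by
      intro j; rw [ih, Finset.sum_mul]; simp_rw [mul_assoc]
    simp_rw [this]
    rw [Finset.sum_comm]
    refine Finset.sum_congr rfl fun k _ => ?_
    rw [← Finset.mul_sum]
    congr 1

-- L5
lemma pow_row_gen (m : ℕ) (β γ : ↥δ) :
    (C r w ^ m) β γ = (C r w ^ ((β : Fin 2 →₀ ℕ) 0 + m)) (mk hδ 0 hr) γ := by
  rw [pow_add, Matrix.mul_apply, Finset.sum_eq_single β]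
  · rw [pow_row0 hδ hr w _ (val_lt hδ β), if_pos rfl, one_mul]
  · intro b _ hb
    rw [pow_row0 hδ hr w _ (val_lt hδ β), if_neg, zero_mul]
    intro he; exact hb (ext0 hδ he)
  · intro h; exact absurd (Finset.mem_univ _) h

-- L6
lemma pow_r_eq (β γ : ↥δ) :
    (C r w ^ r) β γ = ∑ k, w k * (C r w ^ ((k : Fin 2 →₀ ℕ) 0)) β γ := by
  rw [pow_row_gen hδ hr w r β γ, add_comm, pow_r_add hδ hr w _ γ]
  congr 1; ext k
  rw [pow_row_gen hδ hr w _ β γ, add_comm]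

end

section
variable (hδ : ∀ α : Fin 2 →₀ ℕ, α ∈ δ ↔ ∃ k < r, α = Finsupp.single (0 : Fin 2) k)
  (hr : 0 < r) (w v : ↥δ → B)
include hδ hr

-- rows of Dm * C^? : helper
lemma Dm_mul_C (β γ : ↥δ) :
    (Dm r w v * C r w) β γ = ∑ k, v k * (C r w ^ ((β : Fin 2 →₀ ℕ) 0 + 1)) k γ := by
  rw [Matrix.mul_apply]
  have : ∀ j : ↥δ, Dm r w v β j * C r w j γ
      = ∑ k, v k * ((C r w ^ ((β : Fin 2 →₀ ℕ) 0)) k j * C r w j γ) := by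
    intro j; rw [Dm, Finset.sum_mul]; simp_rw [mul_assoc]
  simp_rw [this]
  rw [Finset.sum_comm]
  refine Finset.sum_congr rfl fun k _ => ?_
  rw [← Finset.mul_sum]
  congr 1

lemma commCD : Commute (C r w) (Dm r w v) := by
  show _ = _
  ext β γ
  rw [Dm_mul_C hδ hr w v β γ, Matrix.mul_apply]
  by_cases h : (β : Fin 2 →₀ ℕ) 0 + 1 < r
  · rw [Finset.sum_eq_single (mk hδ ((β : Fin 2 →₀ ℕ) 0 + 1) h)]
    · rw [C, if_pos h, if_pos (idx_mk hδ _ h), one_mul, Dm, idx_mk]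
    · intro b _ hb
      rw [C, if_pos h, if_neg, zero_mul]
      intro he; exact hb (ext0 hδ (by rw [he, idx_mk]))
    · intro h'; exact absurd (Finset.mem_univ _) h'
  · have hre : (β : Fin 2 →₀ ℕ) 0 + 1 = r := by
      have := val_lt hδ β; omega
    have : ∀ j : ↥δ, C r w β j * Dm r w v j γ
        = ∑ k, v k * (w j * (C r w ^ ((j : Fin 2 →₀ ℕ) 0)) k γ) := by
      intro j
      rw [C, if_neg h, Dm, Finset.mul_sum]
      refine Finset.sum_congr rfl fun k _ => ?_; ring
    simp_rw [this]
    rw [Finset.sum_comm, hre]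
    refine Finset.sum_congr rfl fun k _ => ?_
    rw [← Finset.mul_sum, pow_r_eq hδ hr w _ γ]

noncomputable def aFun : (Fin 2 →₀ ℕ) → ↥δ → B := fun α γ =>
  (C r w ^ (α 0) * Dm r w v ^ (α 1)) (mk hδ 0 hr) γ

lemma aFun_delta (α β : ↥δ) :
    aFun hδ hr w v (α : Fin 2 →₀ ℕ) β = if β = α then 1 else 0 := by
  rw [aFun, val1 hδ α, pow_zero, mul_one, pow_row0 hδ hr w _ (val_lt hδ α)]
  by_cases h : β = α
  · rw [if_pos (by rw [h]), if_pos h]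
  · rw [if_neg, if_neg h]
    intro he; exact h (ext0 hδ he)

lemma aFun_rec1 (α : Fin 2 →₀ ℕ) (β : ↥δ) :
    aFun hδ hr w v (α + Finsupp.single 0 1) β =
      ∑ γ : ↥δ, aFun hδ hr w v α γ *
        aFun hδ hr w v ((γ : Fin 2 →₀ ℕ) + Finsupp.single 0 1) β := by
  have h0 : ∀ α' : Fin 2 →₀ ℕ, ((α' + Finsupp.single (0 : Fin 2) 1 : Fin 2 →₀ ℕ)) 0 = α' 0 + 1 := by
    intro α'; rw [Finsupp.add_apply, Finsupp.single_eq_same]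
  have h1 : ∀ α' : Fin 2 →₀ ℕ, ((α' + Finsupp.single (0 : Fin 2) 1 : Fin 2 →₀ ℕ)) 1 = α' 1 := by
    intro α'; rw [Finsupp.add_apply, Finsupp.single_eq_of_ne (by decide), add_zero]
  have hcd := (commCD hδ hr w v).pow_right (α 1)
  rw [aFun, h0, h1, pow_succ, mul_assoc, hcd.eq, ← mul_assoc, Matrix.mul_apply]
  refine Finset.sum_congr rfl fun γ _ => ?_
  congr 1
  rw [aFun, h0, h1, val1 hδ γ, pow_zero, mul_one,
    pow_row0_succ hδ hr w _ (val_lt hδ γ)]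
  congr 1
  exact ext0 hδ (by rw [idx_mk])

lemma aFun_rec2 (α : Fin 2 →₀ ℕ) (β : ↥δ) :
    aFun hδ hr w v (α + Finsupp.single 1 1) β =
      ∑ γ : ↥δ, aFun hδ hr w v α γ *
        aFun hδ hr w v ((γ : Fin 2 →₀ ℕ) + Finsupp.single 1 1) β := by
  have h0 : ∀ α' : Fin 2 →₀ ℕ, ((α' + Finsupp.single (1 : Fin 2) 1 : Fin 2 →₀ ℕ)) 0 = α' 0 := by
    intro α'; rw [Finsupp.add_apply, Finsupp.single_eq_of_ne (by decide), add_zero]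
  have h1 : ∀ α' : Fin 2 →₀ ℕ, ((α' + Finsupp.single (1 : Fin 2) 1 : Fin 2 →₀ ℕ)) 1 = α' 1 + 1 := by
    intro α'; rw [Finsupp.add_apply, Finsupp.single_eq_same]
  rw [aFun, h0, h1, pow_succ, ← mul_assoc, Matrix.mul_apply]
  refine Finset.sum_congr rfl fun γ _ => ?_
  congr 1
  rw [aFun, h0, h1, val1 hδ γ, zero_add, pow_one, Matrix.mul_apply,
    Finset.sum_eq_single γ]
  · rw [pow_row0 hδ hr w _ (val_lt hδ γ), if_pos rfl, one_mul]
  · intro b _ hb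
    rw [pow_row0 hδ hr w _ (val_lt hδ γ), if_neg, zero_mul]
    intro he; exact hb (ext0 hδ he)
  · intro h'; exact absurd (Finset.mem_univ _) h'

lemma aFun_out1 (β : ↥δ) : aFun hδ hr w v (Finsupp.single 0 r) β = w β := by
  rw [aFun, Finsupp.single_eq_same, Finsupp.single_eq_of_ne' (by decide : (0 : Fin 2) ≠ 1),
    pow_zero, mul_one, pow_r_row0 hδ hr w β]

lemma aFun_out2 (β : ↥δ) : aFun hδ hr w v (Finsupp.single 1 1) β = v β := by
  rw [aFun, Finsupp.single_eq_same, Finsupp.single_eq_of_ne' (by decide : (1 : Fin 2) ≠ 0),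
    pow_zero, pow_one, one_mul, Dm, idx_mk, pow_zero, Finset.sum_eq_single β]
  · rw [Matrix.one_apply_eq, mul_one]
  · intro b _ hb
    rw [Matrix.one_apply_ne hb, mul_zero]
  · intro h'; exact absurd (Finset.mem_univ _) h'

end
end S19
theorem stmt19 {B : Type*} [CommRing B] (r : ℕ)
    (δ : Finset (Fin 2 →₀ ℕ))
    (hδ : ∀ α : Fin 2 →₀ ℕ, α ∈ δ ↔ ∃ k < r, α = Finsupp.single (0 : Fin 2) k) :
    Function.Bijective
      (fun x : {a : (Fin 2 →₀ ℕ) → ↥δ → B //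
          (∀ (α β : ↥δ), a (α : Fin 2 →₀ ℕ) β = if β = α then 1 else 0) ∧
          ∀ (α : Fin 2 →₀ ℕ) (i : Fin 2) (β : ↥δ),
            a (α + Finsupp.single i 1) β =
              ∑ γ : ↥δ, a α γ * a ((γ : Fin 2 →₀ ℕ) + Finsupp.single i 1) β} =>
        ((fun β => x.1 (Finsupp.single (0 : Fin 2) r) β,
          fun β => x.1 (Finsupp.single (1 : Fin 2) 1) β) : (↥δ → B) × (↥δ → B))) := by
  by_cases hr : 0 < r
  · constructor
    · -- injectivity
      rintro ⟨f, hf1, hf2⟩ ⟨g, hg1, hg2⟩ h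
      simp only [Prod.mk.injEq] at h
      obtain ⟨hwe, hve⟩ := h
      have hw' : ∀ β, f (Finsupp.single 0 r) β = g (Finsupp.single 0 r) β :=
        fun β => congrFun hwe β
      have hv' : ∀ β, f (Finsupp.single 1 1) β = g (Finsupp.single 1 1) β :=
        fun β => congrFun hve β
      have hA : ∀ γ : ↥δ, f ((γ : Fin 2 →₀ ℕ) + Finsupp.single 0 1)
          = g ((γ : Fin 2 →₀ ℕ) + Finsupp.single 0 1) := by
        intro γ
        obtain ⟨k, hk, hkeq⟩ := (hδ _).1 γ.2
        rw [hkeq, ← Finsupp.single_add]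
        rcases Nat.lt_or_ge (k + 1) r with h' | h'
        · funext β
          rw [show (Finsupp.single (0 : Fin 2) (k+1))
              = ((S19.mk hδ (k+1) h' : ↥δ) : Fin 2 →₀ ℕ) from rfl, hf1, hg1]
        · have : k + 1 = r := by omega
          rw [this]; funext β; exact hw' β
      have hB : ∀ α : Fin 2 →₀ ℕ, f α = g α →
          f (α + Finsupp.single 0 1) = g (α + Finsupp.single 0 1) := by
        intro α hα; funext β
        rw [hf2 α 0 β, hg2 α 0 β]
        refine Finset.sum_congr rfl fun γ _ => ?_
        rw [hα, hA γ]
      have hC : ∀ n, f (Finsupp.single 0 n + Finsupp.single 1 1)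
          = g (Finsupp.single 0 n + Finsupp.single 1 1) := by
        intro n; induction n with
        | zero =>
          rw [Finsupp.single_zero, zero_add]; funext β; exact hv' β
        | succ n ih =>
          have e : Finsupp.single (0 : Fin 2) (n+1) + Finsupp.single 1 1
              = (Finsupp.single 0 n + Finsupp.single 1 1) + Finsupp.single 0 1 := by
            rw [Finsupp.single_add]; abel
          rw [e]; exact hB _ ih
      have hD : ∀ α : Fin 2 →₀ ℕ, f α = g α →
          f (α + Finsupp.single 1 1) = g (α + Finsupp.single 1 1) := by
        intro α hα; funext β
        rw [hf2 α 1 β, hg2 α 1 β]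
        refine Finset.sum_congr rfl fun γ _ => ?_
        obtain ⟨k, hk, hkeq⟩ := (hδ _).1 γ.2
        rw [hα, hkeq, hC k]
      have hE : ∀ m, f (Finsupp.single 0 m) = g (Finsupp.single 0 m) := by
        intro m; induction m with
        | zero =>
          funext β
          rw [show (Finsupp.single (0 : Fin 2) 0)
              = ((S19.mk hδ 0 hr : ↥δ) : Fin 2 →₀ ℕ) from rfl, hf1, hg1]
        | succ m ih =>
          rw [Finsupp.single_add]; exact hB _ ih
      have hF : ∀ n m, f (Finsupp.single 0 m + Finsupp.single 1 n)
          = g (Finsupp.single 0 m + Finsupp.single 1 n) := by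
        intro n; induction n with
        | zero => intro m; rw [Finsupp.single_zero, add_zero]; exact hE m
        | succ n ih =>
          intro m
          rw [Finsupp.single_add, ← add_assoc]
          exact hD _ (ih m)
      apply Subtype.ext
      funext α
      have h := hF (α 1) (α 0)
      rwa [← S19.decomp α] at h
    · -- surjectivity
      rintro ⟨w, v⟩
      refine ⟨⟨S19.aFun hδ hr w v, fun α β => S19.aFun_delta hδ hr w v α β, ?_⟩, ?_⟩
      · intro α i β
        fin_cases i
        · exact S19.aFun_rec1 hδ hr w v α β
        · exact S19.aFun_rec2 hδ hr w v α β
      · exact Prod.ext (funext fun β => S19.aFun_out1 hδ hr w v β)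
          (funext fun β => S19.aFun_out2 hδ hr w v β)
  · -- r = 0 : δ is empty
    have hempty : ∀ β : ↥δ, False := by
      intro β
      obtain ⟨k, hk, _⟩ := (hδ _).1 β.2
      omega
    constructor
    · intro x y _
      apply Subtype.ext; funext α β; exact (hempty β).elim
    · rintro ⟨w, v⟩
      exact ⟨⟨fun _ β => (hempty β).elim,
        fun α β => (hempty β).elim, fun α i β => (hempty β).elim⟩,
        Prod.ext (funext fun β => (hempty β).elim) (funext fun β => (hempty β).elim)⟩
end
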